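/- arXiv:2001.05382 — 3 statements merged into one kernel-verified Lean document; each statement's English description precedes it below -/
import Mathlib

section
/- For real $X > 0$, let $N^*(X)$ denote the number of ordered finite tuples $(d_1,\ldots,d_j)$ of positive integers (with $j \geq 1$ varying) satisfying $\prod_{k=1}^j (3 d_k) \leq X$. Then $N^*(X) = 0$ for $X < 3$, and for all $X > 0$ one has $N^*(X) \leq (X/3)^{5/3}$. -/
open scoped BigOperators


noncomputable def Cprod (l : List ℕ+) : ℝ := (l.map (fun d : ℕ+ => 3 * ((d : ℕ) : ℝ))).prod

def LS (X : ℝ) : Set (List ℕ+) := {l | l ≠ [] ∧ Cprod l ≤ X}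

lemma Cprod_nil : Cprod [] = 1 := by simp [Cprod]

lemma Cprod_cons (c : ℕ+) (l : List ℕ+) : Cprod (c :: l) = 3 * (c : ℕ) * Cprod l := by
  simp [Cprod]

lemma one_le_Cprod (l : List ℕ+) : 1 ≤ Cprod l := by
  induction l with
  | nil => simp [Cprod_nil]
  | cons c l ih =>
    rw [Cprod_cons]
    have hc : (1:ℝ) ≤ (c:ℕ) := by exact_mod_cast c.one_le
    nlinarith

lemma three_le_Cprod (c : ℕ+) (l : List ℕ+) : 3 ≤ Cprod (c :: l) := by
  rw [Cprod_cons]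
  have hc : (1:ℝ) ≤ (c:ℕ) := by exact_mod_cast c.one_le
  nlinarith [one_le_Cprod l]

lemma LS_empty {X : ℝ} (hX : X < 3) : LS X = ∅ := by
  ext l
  simp only [Set.mem_empty_iff_false, iff_false]
  rintro ⟨hne, hC⟩
  match l with
  | [] => exact hne rfl
  | c :: t => exact absurd hC (by push_neg; exact lt_of_lt_of_le hX (three_le_Cprod c t))

lemma ncard_biUnion_le {ι α : Type*} (s : Finset ι) (t : ι → Set α) :
    (⋃ i ∈ s, t i).ncard ≤ ∑ i ∈ s, (t i).ncard := by
  classical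
  induction s using Finset.induction with
  | empty => simp
  | @insert a s ha ih =>
    rw [Finset.set_biUnion_insert, Finset.sum_insert ha]
    exact le_trans (Set.ncard_union_le _ _) (by gcongr)


-- key pointwise inequality
lemma key_rpow (x : ℝ) (hx : 2 ≤ x) :
    x ^ (-(5:ℝ)/3) ≤ 3/2 * ((x-1) ^ (-(2:ℝ)/3) - x ^ (-(2:ℝ)/3)) := by
  have hx0 : (0:ℝ) < x := by linarith
  have hx1 : (0:ℝ) ≤ x - 1 := by linarith
  set u := x ^ ((1:ℝ)/3) with hu_def
  set v := (x-1) ^ ((1:ℝ)/3) with hv_def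
  have hu0 : 0 < u := Real.rpow_pos_of_pos hx0 _
  have hv0 : 0 ≤ v := Real.rpow_nonneg hx1 _
  have hu3 : u ^ (3:ℕ) = x := by
    rw [hu_def, ← Real.rpow_natCast (x ^ ((1:ℝ)/3)) 3, ← Real.rpow_mul hx0.le]
    norm_num
  have hv3 : v ^ (3:ℕ) = x - 1 := by
    rw [hv_def, ← Real.rpow_natCast ((x-1) ^ ((1:ℝ)/3)) 3, ← Real.rpow_mul hx1]
    norm_num
  have hv1 : 1 ≤ v := by
    have : (1:ℝ) ^ (3:ℕ) ≤ v ^ (3:ℕ) := by rw [hv3]; norm_num; linarith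
    exact le_of_pow_le_pow_left₀ (by norm_num) hv0 this
  have hu1 : 1 ≤ u := by
    have : (1:ℝ) ^ (3:ℕ) ≤ u ^ (3:ℕ) := by rw [hu3]; norm_num; linarith
    exact le_of_pow_le_pow_left₀ (by norm_num) hu0.le this
  have hvu : v ≤ u := by
    apply le_of_pow_le_pow_left₀ (n := 3) (by norm_num) hu0.le
    rw [hu3, hv3]; linarith
  -- u ≤ v + 1/(3 v^2)
  have hstep : u ≤ v + 1/(3*v^2) := by
    apply le_of_pow_le_pow_left₀ (n := 3) (by norm_num) (by positivity)
    rw [hu3]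
    have h1 : (v + 1/(3*v^2)) ^ (3:ℕ)
        = v^3 + 1 + (1/(3*v^3) + 1/(27*v^6)) := by
      field_simp
      ring
    rw [h1, hv3]
    have hp1 : 0 < 1/(3*(x-1)) := by
      have : (0:ℝ) < x - 1 := by linarith
      positivity
    have hv0' : (0:ℝ) < v := lt_of_lt_of_le one_pos hv1
    have hp2 : 0 < 1/(27*v^6) := by positivity
    linarith
  -- main polynomial inequality:  2*v^2 ≤ 3*u^3*(u^2 - v^2)
  have hpoly : 2*v^2 ≤ 3*u^3*(u^2 - v^2) := by
    have hv0' : (0:ℝ) < v := lt_of_lt_of_le one_pos hv1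
    have h2 : 3*u*v^2 ≤ 3*v^3 + 1 := by
      have hm := mul_le_mul_of_nonneg_left hstep (by positivity : (0:ℝ) ≤ 3*v^2)
      have hid : 3*v^2*(v + 1/(3*v^2)) = 3*v^3 + 1 := by field_simp
      rw [hid] at hm
      linarith
    have h3 : (2:ℝ) ≤ 3*u^3 - 3*u*v^2 := by nlinarith [hu3, hv3]
    have h4 : v^2 ≤ u^2 := by nlinarith [hvu, hv0]
    nlinarith [mul_le_mul_of_nonneg_right h3 (sq_nonneg u)]
  -- rewrite rpow in terms of u, v
  have e1 : x ^ (-(5:ℝ)/3) = (u ^ (5:ℕ))⁻¹ := by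
    rw [hu_def, ← Real.rpow_natCast (x ^ ((1:ℝ)/3)) 5, ← Real.rpow_mul hx0.le,
      ← Real.rpow_neg hx0.le]
    norm_num
  have e2 : x ^ (-(2:ℝ)/3) = (u ^ (2:ℕ))⁻¹ := by
    rw [hu_def, ← Real.rpow_natCast (x ^ ((1:ℝ)/3)) 2, ← Real.rpow_mul hx0.le,
      ← Real.rpow_neg hx0.le]
    norm_num
  have e3 : (x-1) ^ (-(2:ℝ)/3) = (v ^ (2:ℕ))⁻¹ := by
    rw [hv_def, ← Real.rpow_natCast ((x-1) ^ ((1:ℝ)/3)) 2, ← Real.rpow_mul hx1,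
      ← Real.rpow_neg hx1]
    norm_num
  rw [e1, e2, e3]
  rw [← sub_nonneg]
  have hv0' : 0 < v := lt_of_lt_of_le one_pos hv1
  have expand : 3/2 * ((v ^ (2:ℕ))⁻¹ - (u ^ (2:ℕ))⁻¹) - (u ^ (5:ℕ))⁻¹
      = (3*u^3*(u^2 - v^2) - 2*v^2) / (2 * v^2 * u^5) := by
    field_simp
  rw [expand]
  apply div_nonneg (by linarith) (by positivity)


lemma zeta_sum : ∀ D : ℕ, ∑ d ∈ Finset.Icc 1 D, ((d:ℝ)) ^ (-(5:ℝ)/3)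
    ≤ 5/2 - 3/2 * ((max 1 D : ℕ) : ℝ) ^ (-(2:ℝ)/3) := by
  intro D
  induction D with
  | zero => simp [Real.one_rpow]; norm_num
  | succ D ih =>
    rw [Finset.sum_Icc_succ_top (by omega : 1 ≤ D + 1)]
    rcases Nat.eq_zero_or_pos D with hD | hD
    · subst hD
      simp [Real.one_rpow]
      norm_num
    · have hmax : max 1 D = D := by omega
      have hmax' : max 1 (D+1) = D + 1 := by omega
      rw [hmax] at ih
      rw [hmax']
      have hkey := key_rpow ((D:ℝ)+1) (by exact_mod_cast by omega : (2:ℝ) ≤ (D:ℝ)+1)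
      have : ((D:ℝ)+1) - 1 = (D:ℝ) := by ring
      rw [this] at hkey
      push_cast
      push_cast at ih
      linarith

lemma zeta_sum' (D : ℕ) : ∑ d ∈ Finset.Icc 1 D, ((d:ℝ)) ^ (-(5:ℝ)/3) ≤ 5/2 := by
  have h := zeta_sum D
  have h2 : (0:ℝ) ≤ ((max 1 D : ℕ) : ℝ) ^ (-(2:ℝ)/3) :=
    Real.rpow_nonneg (by positivity) _
  linarith

lemma num1 : (11:ℝ)/6 ≤ (3:ℝ) ^ ((2:ℝ)/3) := by
  have h0 : (0:ℝ) ≤ (3:ℝ) ^ ((2:ℝ)/3) := Real.rpow_nonneg (by norm_num) _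
  apply le_of_pow_le_pow_left₀ (n := 3) (by norm_num) h0
  rw [← Real.rpow_natCast ((3:ℝ) ^ ((2:ℝ)/3)) 3, ← Real.rpow_mul (by norm_num : (0:ℝ) ≤ 3)]
  rw [show (((2:ℝ)/3) * (3:ℕ)) = 2 by push_cast; ring]
  rw [show ((3:ℝ) ^ (2:ℝ)) = (3:ℝ) ^ (2:ℕ) by rw [show (2:ℝ) = ((2:ℕ):ℝ) by norm_num, Real.rpow_natCast]]
  norm_num

lemma num2 : (11:ℝ)/2 ≤ (3:ℝ) ^ ((5:ℝ)/3) := by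
  have h0 : (0:ℝ) ≤ (3:ℝ) ^ ((5:ℝ)/3) := Real.rpow_nonneg (by norm_num) _
  apply le_of_pow_le_pow_left₀ (n := 3) (by norm_num) h0
  rw [← Real.rpow_natCast ((3:ℝ) ^ ((5:ℝ)/3)) 3, ← Real.rpow_mul (by norm_num : (0:ℝ) ≤ 3)]
  rw [show (((5:ℝ)/3) * (3:ℕ)) = 5 by push_cast; ring]
  rw [show ((3:ℝ) ^ (5:ℝ)) = (3:ℝ) ^ (5:ℕ) by rw [show (5:ℝ) = ((5:ℕ):ℝ) by norm_num, Real.rpow_natCast]]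
  norm_num


lemma main_lemma : ∀ (n : ℕ) (X : ℝ), 0 < X → ⌊X⌋₊ ≤ n →
    (LS X).Finite ∧ ((LS X).ncard : ℝ) ≤ (X/3) ^ ((5:ℝ)/3) := by
  intro n
  induction n with
  | zero =>
    intro X hX hfl
    have : X < 3 := by
      by_contra h
      push_neg at h
      have : 3 ≤ ⌊X⌋₊ := Nat.le_floor (by exact_mod_cast h)
      omega
    rw [LS_empty this]
    exact ⟨Set.finite_empty, by simp [Real.rpow_nonneg (by positivity : (0:ℝ) ≤ X/3)]⟩
  | succ n ih =>
    intro X hX hfl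
    rcases lt_or_ge X 3 with h3 | h3
    · rw [LS_empty h3]
      exact ⟨Set.finite_empty, by simp [Real.rpow_nonneg (by positivity : (0:ℝ) ≤ X/3)]⟩
    set D := ⌊X/3⌋₊ with hD_def
    have hD1 : 1 ≤ D := Nat.le_floor (by push_cast; linarith)
    -- the recursion sets
    set U : ℕ → Set (List ℕ+) :=
      fun d => (fun l => (d.toPNat') :: l) '' (insert [] (LS (X / (3*d)))) with hU_def
    -- IH applies to each piece
    have hfloor : ∀ d : ℕ, 1 ≤ d → ⌊X / (3*d)⌋₊ ≤ n := by
      intro d hd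
      have hd1 : (1:ℝ) ≤ (d:ℝ) := by exact_mod_cast hd
      have h1 : X / (3*d) ≤ X / 3 := by
        apply div_le_div_of_nonneg_left hX.le (by norm_num) (by nlinarith)
      have h2 : ⌊X/3⌋₊ + 1 ≤ ⌊X⌋₊ := by
        apply Nat.le_floor
        push_cast
        have := Nat.floor_le (by positivity : (0:ℝ) ≤ X/3)
        linarith
      have := Nat.floor_le_floor (R := ℝ) h1
      omega
    have hpos : ∀ d : ℕ, 1 ≤ d → (0:ℝ) < X / (3*d) := by
      intro d hd
      have hd1 : (1:ℝ) ≤ (d:ℝ) := by exact_mod_cast hd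
      positivity
    have hih : ∀ d ∈ Finset.Icc 1 D, (LS (X/(3*d))).Finite ∧
        ((LS (X/(3*d))).ncard : ℝ) ≤ ((X/(3*d))/3) ^ ((5:ℝ)/3) := by
      intro d hd
      have hd1 : 1 ≤ d := (Finset.mem_Icc.mp hd).1
      exact ih (X/(3*d)) (hpos d hd1) (hfloor d hd1)
    -- inclusion
    have hsub : LS X ⊆ ⋃ d ∈ Finset.Icc 1 D, U d := by
      rintro l ⟨hne, hC⟩
      match l with
      | [] => exact absurd rfl hne
      | c :: rest =>
        have hc1 : (1:ℝ) ≤ ((c:ℕ):ℝ) := by exact_mod_cast c.one_le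
        have hCl : Cprod (c :: rest) = 3 * (c:ℕ) * Cprod rest := Cprod_cons c rest
        have hcX : 3 * ((c:ℕ):ℝ) ≤ X := by
          calc 3 * ((c:ℕ):ℝ) ≤ 3 * (c:ℕ) * Cprod rest := by
                nlinarith [one_le_Cprod rest]
            _ ≤ X := by rw [← hCl]; exact hC
        have hcD : (c:ℕ) ≤ D := Nat.le_floor (by push_cast; linarith)
        apply Set.mem_biUnion (show (c:ℕ) ∈ Finset.Icc 1 D from Finset.mem_Icc.mpr ⟨c.pos, hcD⟩)
        · have htp : ((c:ℕ) : ℕ).toPNat' = c := by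
            apply PNat.coe_injective
            rw [PNat.toPNat'_coe c.pos]
          refine ⟨rest, ?_, by rw [htp]⟩
          rcases eq_or_ne rest [] with hr | hr
          · rw [hr]; exact Set.mem_insert _ _
          · apply Set.mem_insert_of_mem
            refine ⟨hr, ?_⟩
            rw [le_div_iff₀ (by positivity : (0:ℝ) < 3*((c:ℕ):ℝ))]
            calc Cprod rest * (3*((c:ℕ):ℝ)) = 3 * (c:ℕ) * Cprod rest := by ring
              _ ≤ X := by rw [← hCl]; exact hC
    -- finiteness
    have hUfin : ∀ d ∈ Finset.Icc 1 D, (U d).Finite := by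
      intro d hd
      exact (((hih d hd).1).insert []).image _
    have hfin : (LS X).Finite :=
      Set.Finite.subset (Set.Finite.biUnion (Finset.Icc 1 D).finite_toSet hUfin) hsub
    refine ⟨hfin, ?_⟩
    -- counting
    have hcount : (LS X).ncard ≤ ∑ d ∈ Finset.Icc 1 D, (1 + (LS (X/(3*d))).ncard) := by
      calc (LS X).ncard ≤ (⋃ d ∈ Finset.Icc 1 D, U d).ncard :=
            Set.ncard_le_ncard hsub (Set.Finite.biUnion (Finset.Icc 1 D).finite_toSet hUfin)
        _ ≤ ∑ d ∈ Finset.Icc 1 D, (U d).ncard := ncard_biUnion_le _ _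
        _ ≤ ∑ d ∈ Finset.Icc 1 D, (1 + (LS (X/(3*d))).ncard) := by
            apply Finset.sum_le_sum
            intro d hd
            rw [hU_def]
            rw [Set.ncard_image_of_injective _ (fun a b h => by injection h)]
            rw [add_comm]
            exact Set.ncard_insert_le _ _
    have hcountR : ((LS X).ncard : ℝ) ≤
        ∑ d ∈ Finset.Icc 1 D, (1 + ((LS (X/(3*d))).ncard : ℝ)) := by
      exact_mod_cast hcount
    have hDle : (D:ℝ) ≤ X/3 := Nat.floor_le (by positivity)
    rcases lt_or_ge X 9 with h9 | h9
    · -- small case : all the inner sets are empty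
      have hzero : ∀ d ∈ Finset.Icc 1 D, ((LS (X/(3*d))).ncard : ℝ) = 0 := by
        intro d hd
        have hd1 : 1 ≤ d := (Finset.mem_Icc.mp hd).1
        have hd1' : (1:ℝ) ≤ (d:ℝ) := by exact_mod_cast hd1
        have : X/(3*d) < 3 := by
          rw [div_lt_iff₀ (by positivity)]
          nlinarith
        rw [LS_empty this]
        simp
      have hsum : ∑ d ∈ Finset.Icc 1 D, (1 + ((LS (X/(3*d))).ncard : ℝ)) = D := by
        rw [Finset.sum_congr rfl (fun d hd => by rw [hzero d hd, add_zero])]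
        simp [Nat.card_Icc]
      rw [hsum] at hcountR
      have h1 : (1:ℝ) ≤ X/3 := by linarith
      calc ((LS X).ncard : ℝ) ≤ (D:ℝ) := hcountR
        _ ≤ X/3 := hDle
        _ = (X/3) ^ (1:ℝ) := by rw [Real.rpow_one]
        _ ≤ (X/3) ^ ((5:ℝ)/3) := Real.rpow_le_rpow_of_exponent_le h1 (by norm_num)
    · -- large case
      have hterm : ∀ d ∈ Finset.Icc 1 D,
          (1 + ((LS (X/(3*d))).ncard : ℝ)) ≤ 1 + (X/9) ^ ((5:ℝ)/3) * ((d:ℝ)) ^ (-(5:ℝ)/3) := by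
        intro d hd
        have hd1 : 1 ≤ d := (Finset.mem_Icc.mp hd).1
        have hd1' : (1:ℝ) ≤ (d:ℝ) := by exact_mod_cast hd1
        have hd0 : (0:ℝ) < (d:ℝ) := by linarith
        have heq : ((X/(3*d))/3) = (X/9) * ((d:ℝ))⁻¹ := by
          have hdne : (d:ℝ) ≠ 0 := ne_of_gt hd0
          field_simp
          try ring
          try tauto
        have heq2 : ((X/(3*d))/3) ^ ((5:ℝ)/3) = (X/9) ^ ((5:ℝ)/3) * ((d:ℝ)) ^ (-(5:ℝ)/3) := by
          rw [heq, Real.mul_rpow (by positivity) (by positivity),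
            Real.inv_rpow hd0.le, ← Real.rpow_neg hd0.le]
          norm_num
        have := (hih d hd).2
        rw [heq2] at this
        linarith
      have hsum2 : ∑ d ∈ Finset.Icc 1 D, (1 + ((LS (X/(3*d))).ncard : ℝ)) ≤
          (D:ℝ) + (X/9) ^ ((5:ℝ)/3) * (5/2) := by
        calc ∑ d ∈ Finset.Icc 1 D, (1 + ((LS (X/(3*d))).ncard : ℝ))
            ≤ ∑ d ∈ Finset.Icc 1 D, (1 + (X/9) ^ ((5:ℝ)/3) * ((d:ℝ)) ^ (-(5:ℝ)/3)) :=
              Finset.sum_le_sum hterm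
          _ = (D:ℝ) + (X/9) ^ ((5:ℝ)/3) * ∑ d ∈ Finset.Icc 1 D, ((d:ℝ)) ^ (-(5:ℝ)/3) := by
              rw [Finset.sum_add_distrib, ← Finset.mul_sum]
              simp [Nat.card_Icc]
          _ ≤ (D:ℝ) + (X/9) ^ ((5:ℝ)/3) * (5/2) := by
              have h0 : (0:ℝ) ≤ (X/9) ^ ((5:ℝ)/3) := Real.rpow_nonneg (by positivity) _
              nlinarith [zeta_sum' D]
      -- final analytic inequality
      have hfinal : (X/3) + (X/9) ^ ((5:ℝ)/3) * (5/2) ≤ (X/3) ^ ((5:ℝ)/3) := by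
        set t := X/3 with ht_def
        have ht3 : (3:ℝ) ≤ t := by rw [ht_def]; linarith
        have ht0 : (0:ℝ) < t := by linarith
        have hX9 : X/9 = t/3 := by rw [ht_def]; ring
        have hsplit : (t/3) ^ ((5:ℝ)/3) = t ^ ((5:ℝ)/3) / (3:ℝ) ^ ((5:ℝ)/3) :=
          Real.div_rpow ht0.le (by norm_num) _
        have htt : t ^ ((5:ℝ)/3) = t * t ^ ((2:ℝ)/3) := by
          rw [show (5:ℝ)/3 = 1 + 2/3 by norm_num, Real.rpow_add ht0, Real.rpow_one]
        have hs : (3:ℝ) ^ ((2:ℝ)/3) ≤ t ^ ((2:ℝ)/3) :=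
          Real.rpow_le_rpow (by norm_num) ht3 (by norm_num)
        set s := t ^ ((2:ℝ)/3) with hs_def
        set B := (3:ℝ) ^ ((5:ℝ)/3) with hB_def
        have hs116 : (11:ℝ)/6 ≤ s := le_trans num1 hs
        have hB112 : (11:ℝ)/2 ≤ B := num2
        have hB0 : (0:ℝ) < B := lt_of_lt_of_le (by norm_num) hB112
        rw [hX9, hsplit, htt]
        have key : B + s * (5/2) ≤ s * B := by
          nlinarith [mul_le_mul_of_nonneg_left hs116 (by linarith : (0:ℝ) ≤ B - 11/2)]
        rw [← sub_nonneg]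
        have expand : t * s - (t + t * s / B * (5/2)) = (t*(s*B) - t*(B + s*(5/2)))/B := by
          field_simp
        rw [expand]
        apply div_nonneg ?_ hB0.le
        have := mul_le_mul_of_nonneg_left key ht0.le
        linarith
      calc ((LS X).ncard : ℝ) ≤ (D:ℝ) + (X/9) ^ ((5:ℝ)/3) * (5/2) := le_trans hcountR hsum2
        _ ≤ (X/3) + (X/9) ^ ((5:ℝ)/3) * (5/2) := by linarith
        _ ≤ (X/3) ^ ((5:ℝ)/3) := hfinal


theorem stmt_1 (X : ℝ) (hX : 0 < X) :
    (X < 3 →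
      Nat.card {p : Σ j : ℕ, Fin (j + 1) → ℕ+ //
        (∏ k, (3 * (p.2 k : ℕ) : ℝ)) ≤ X} = 0) ∧
    (Nat.card {p : Σ j : ℕ, Fin (j + 1) → ℕ+ //
        (∏ k, (3 * (p.2 k : ℕ) : ℝ)) ≤ X} : ℝ) ≤ (X / 3) ^ ((5 : ℝ) / 3) := by
  have hprod3 : ∀ (j : ℕ) (g : Fin (j+1) → ℕ+), (3:ℝ) ≤ ∏ k, (3 * ((g k : ℕ) : ℝ)) := by
    intro j g
    rw [Fin.prod_univ_succ]
    have hrest : (1:ℝ) ≤ ∏ i : Fin j, (3 * ((g i.succ : ℕ) : ℝ)) := by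
      have := Finset.prod_le_prod (s := Finset.univ) (f := fun _ : Fin j => (1:ℝ))
        (g := fun i => 3 * ((g i.succ : ℕ) : ℝ)) (fun i _ => zero_le_one)
        (fun i _ => by
          have : (1:ℝ) ≤ ((g i.succ : ℕ) : ℝ) := by exact_mod_cast (g i.succ).one_le
          show (1:ℝ) ≤ 3 * ((g i.succ : ℕ) : ℝ)
          linarith)
      simpa using this
    have h0 : (3:ℝ) ≤ 3 * ((g 0 : ℕ) : ℝ) := by
      have : (1:ℝ) ≤ ((g 0 : ℕ) : ℝ) := by exact_mod_cast (g 0).one_le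
      linarith
    nlinarith
  constructor
  · intro h3
    have : IsEmpty {p : Σ j : ℕ, Fin (j + 1) → ℕ+ //
        (∏ k, (3 * (p.2 k : ℕ) : ℝ)) ≤ X} := by
      refine ⟨fun p => ?_⟩
      have := hprod3 p.1.1 p.1.2
      have := p.2
      linarith
    exact Nat.card_of_isEmpty
  · obtain ⟨hfin, hbound⟩ := main_lemma ⌊X⌋₊ X hX le_rfl
    have := hfin.to_subtype
    set A := {p : Σ j : ℕ, Fin (j + 1) → ℕ+ // (∏ k, (3 * (p.2 k : ℕ) : ℝ)) ≤ X} with hA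
    have hmem : ∀ p : A, List.ofFn p.1.2 ∈ LS X := by
      rintro ⟨⟨j, g⟩, hp⟩
      refine ⟨by simp, ?_⟩
      have : Cprod (List.ofFn g) = ∏ k, (3 * ((g k : ℕ) : ℝ)) := by
        rw [Cprod, List.map_ofFn, List.prod_ofFn]
        rfl
      rw [this]
      exact hp
    set f : A → ↥(LS X) := fun p => ⟨List.ofFn p.1.2, hmem p⟩ with hf
    have hinj : Function.Injective f := by
      rintro ⟨⟨j, g⟩, hp⟩ ⟨⟨j', g'⟩, hp'⟩ h
      have h' : List.ofFn g = List.ofFn g' := congrArg Subtype.val h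
      have hlen : j = j' := by
        have := congrArg List.length h'
        simpa using this
      subst hlen
      have : g = g' := List.ofFn_injective h'
      subst this
      rfl
    have hcard : Nat.card A ≤ Nat.card ↥(LS X) := Nat.card_le_card_of_injective f hinj
    rw [Nat.card_coe_set_eq] at hcard
    calc (Nat.card A : ℝ) ≤ ((LS X).ncard : ℝ) := by exact_mod_cast hcard
      _ ≤ (X/3) ^ ((5:ℝ)/3) := hbound
end

section
/- Let $F_2$ be the free group on $a_1, a_2$ and fix an integer $j \geq 2$. Consider the $2^{2j}$ elements of $F_2$ of the form $w = a_1^{2\epsilon_1} a_2^{2\epsilon_2} \cdots a_1^{2\epsilon_{2j-1}} a_2^{2\epsilon_{2j}}$ with $\epsilon_i \in \{1,-1\}$. Every conjugacy class of $F_2$ contains at most $2j$ such elements; consequently the number of distinct conjugacy classes represented by these elements is at least $2^{2j}/(2j)$. -/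
set_option linter.unusedSectionVars false
set_option maxHeartbeats 1000000

open FreeGroup List

section Aux
variable {α : Type*} [DecidableEq α]




/-- Non-cancelling relation between adjacent letters. -/
def NC (a b : α × Bool) : Prop := a.1 = b.1 → a.2 = b.2

lemma reduce_eq_self_of_chain' {L : List (α × Bool)} (h : List.Chain' NC L) :
    FreeGroup.reduce L = L := by
  induction L with
  | nil => rfl
  | cons x L ih =>
    have hL := ih h.tail
    rw [reduce.cons, hL]
    cases L with
    | nil => rfl
    | cons y t =>
      have hxy : NC x y := (List.isChain_cons_cons.1 h).1
      have : ¬ (x.1 = y.1 ∧ x.2 = !y.2) := by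
        rintro ⟨h1, h2⟩
        have := hxy h1
        simp [this] at h2
      simp [this]

lemma chain'_of_reduce_eq_self {L : List (α × Bool)} (h : FreeGroup.reduce L = L) :
    List.Chain' NC L := by
  induction L with
  | nil => constructor
  | cons x L ih =>
    rw [reduce.cons] at h
    rcases hr : reduce L with _ | ⟨y, t⟩
    · rw [hr] at h
      simp only at h
      injection h with _ h2
      subst h2; exact List.isChain_singleton _
    · rw [hr] at h
      simp only at h
      by_cases hc : x.1 = y.1 ∧ x.2 = !y.2
      · rw [if_pos hc] at h
        have := congrArg List.length h
        have hle := FreeGroup.Red.length_le (FreeGroup.reduce.red (L := L))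
        rw [hr] at hle
        simp at this hle
        omega
      · rw [if_neg hc] at h
        injection h with _ h2
        subst h2
        refine List.isChain_cons_cons.2 ⟨fun h1 => ?_, ih (by rw [hr])⟩
        by_contra h2'
        exact hc ⟨h1, by revert h2'; cases x.2 <;> cases y.2 <;> simp⟩



lemma invRev_append' (L₁ L₂ : List (α × Bool)) :
    invRev (L₁ ++ L₂) = invRev L₂ ++ invRev L₁ := by
  simp [invRev, List.reverse_append]

lemma invRev_singleton (x : α × Bool) : invRev [x] = [(x.1, !x.2)] := by
  simp [invRev]

lemma inv_mk_singleton (x : α × Bool) : (mk [x])⁻¹ = mk [(x.1, !x.2)] := by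
  rw [inv_mk, invRev_singleton]

lemma mk_cancel_cons (x : α × Bool) (t : List (α × Bool)) :
    mk ((x.1, !x.2) :: x :: t) = mk t := by
  have : ((x.1, !x.2) :: x :: t) = [(x.1, !x.2)] ++ [x] ++ t := by simp
  rw [this, ← mul_mk, ← mul_mk]
  have : (mk [x] : FreeGroup α)⁻¹ = mk [(x.1, !x.2)] := inv_mk_singleton x
  rw [← this, inv_mul_cancel, one_mul]

/-- Conjugating by the inverse of the head rotates by one. -/
lemma conj_head (x : α × Bool) (t : List (α × Bool)) :
    mk [(x.1, !x.2)] * mk (x :: t) * (mk [(x.1, !x.2)])⁻¹ = mk (t ++ [x]) := by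
  have h1 : (mk [(x.1, !x.2)] : FreeGroup α)⁻¹ = mk [x] := by
    rw [inv_mk_singleton]; simp
  rw [h1, mul_mk, mul_mk]
  have h2 : [(x.1,!x.2)] ++ (x :: t) ++ [x] = (x.1,!x.2) :: x :: (t ++ [x]) := by simp
  rw [h2, mk_cancel_cons]

/-- Conjugating by the last letter rotates backwards by one. -/
lemma conj_last (x : α × Bool) (t : List (α × Bool)) :
    mk [x] * mk (t ++ [x]) * (mk [x])⁻¹ = mk (x :: t) := by
  rw [inv_mk_singleton, mul_mk, mul_mk]
  have : ([x] ++ (t ++ [x])) ++ [(x.1, !x.2)] = (x :: t) ++ ([x] ++ [(x.1,!x.2)]) := by simp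
  rw [this, ← mul_mk]
  have h1 : ([x] ++ [(x.1, !x.2)] : List (α × Bool)) = [x] ++ [(x.1,!x.2)] := rfl
  have : (mk ([x] ++ [(x.1, !x.2)]) : FreeGroup α) = 1 := by
    rw [← mul_mk, ← inv_mk_singleton, mul_inv_cancel]
  rw [this, mul_one]

lemma chain'_invRev {L : List (α × Bool)} (h : List.Chain' NC L) :
    List.Chain' NC (invRev L) := by
  rw [invRev, List.Chain', List.isChain_reverse]
  rw [List.isChain_map]
  refine h.imp ?_
  rintro ⟨a, b⟩ ⟨c, d⟩ hnc h1
  dsimp at h1 ⊢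
  have hb : b = d := hnc h1.symm
  rw [hb]

lemma chain'_triple {v : List (α × Bool)} (h : List.Chain' NC (v ++ v)) :
    List.Chain' NC (v ++ v ++ v) := by
  rcases List.isChain_append.1 h with ⟨h1, h2, h3⟩
  rw [List.append_assoc]
  exact List.isChain_append.2 ⟨h1, h, by
    intro x hx y hy
    apply h3 x hx y
    rcases v with _ | ⟨a, t⟩
    · simp at hy
    · simpa using hy⟩

lemma chain'_rotate_doubled {v : List (α × Bool)} (h : List.Chain' NC (v ++ v)) (k : ℕ) :
    List.Chain' NC (v.rotate k ++ v.rotate k) := by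
  rcases eq_or_ne v [] with rfl | hv
  · exact List.isChain_nil
  have hpos : 0 < v.length := List.length_pos_iff.2 hv
  rw [← List.rotate_mod]
  set m := k % v.length with hm
  have hmle : m ≤ v.length := (Nat.mod_lt _ hpos).le
  rw [List.rotate_eq_drop_append_take hmle]
  have hsplit := (List.take_append_drop m v).symm
  have key : v ++ v ++ v = v.take m ++ ((v.drop m ++ v.take m) ++ (v.drop m ++ v.take m)) ++ v.drop m := by
    conv_lhs => rw [hsplit]
    simp only [List.append_assoc]
  have h3 := chain'_triple h
  rw [key] at h3
  exact ((List.isChain_append.1 ((List.isChain_append.1 h3).1)).2).1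

lemma conj_last' (x : α × Bool) (t : List (α × Bool)) :
    mk [x] * mk (t ++ [x]) * (mk [x])⁻¹ = mk ((t ++ [x]).rotate ((t ++ [x]).length - 1)) := by
  have h1 : (t ++ [x]).length - 1 = t.length := by simp
  rw [h1, List.rotate_eq_drop_append_take (by simp), List.drop_left, List.take_left]
  exact conj_last x t
lemma conj_cyclic (n : ℕ) : ∀ (g : FreeGroup α) (v : List (α × Bool)),
    g.toWord.length = n → v ≠ [] → List.Chain' NC (v ++ v) →
    (g * mk v * g⁻¹).toWord.length ≤ v.length →
    ∃ k < v.length, g * mk v * g⁻¹ = mk (v.rotate k) := by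
  induction n using Nat.strong_induction_on with
  | _ n ih =>
  intro g v hg hv hcr hlen
  by_cases hg1 : g = 1
  · exact ⟨0, List.length_pos_iff.2 hv, by simp [hg1]⟩
  have hne : g.toWord ≠ [] := fun h => hg1 (toWord_eq_nil_iff.1 h)
  set gw := g.toWord with hgw
  set x := gw.getLast hne with hx
  set t := gw.dropLast with ht
  have hts : t ++ [x] = gw := List.dropLast_append_getLast hne
  have hchain : List.Chain' NC gw := chain'_of_reduce_eq_self (reduce_toWord g)
  have hchain_t : List.Chain' NC t := (List.isChain_append.1 (hts ▸ hchain)).1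
  have h't : (mk t : FreeGroup α).toWord = t := by
    rw [toWord_mk, reduce_eq_self_of_chain' hchain_t]
  have hg_eq : g = mk t * mk [x] := by rw [mul_mk, hts, hgw, mk_toWord]
  have hlent : t.length < n := by
    have := congrArg List.length hts
    simp only [List.length_append, List.length_singleton] at this
    omega
  have hvpos : 0 < v.length := List.length_pos_iff.2 hv
  obtain ⟨c, tl, hvc⟩ : ∃ c tl, v = c :: tl := by
    cases v with
    | nil => exact absurd rfl hv
    | cons a b => exact ⟨a, b, rfl⟩
  -- helper for the two rotation cases
  have step : ∀ m : ℕ, mk [x] * mk v * (mk [x])⁻¹ = mk (v.rotate m) →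
      ∃ k < v.length, g * mk v * g⁻¹ = mk (v.rotate k) := by
    intro m hconj
    have hsplit : g * mk v * g⁻¹ = mk t * mk (v.rotate m) * (mk t)⁻¹ := by
      rw [hg_eq, ← hconj]; group
    obtain ⟨k, hk, heq⟩ := ih t.length hlent (mk t) (v.rotate m) (by rw [h't])
      (by simp [List.rotate_eq_nil_iff, hv])
      (chain'_rotate_doubled hcr m)
      (by rw [← hsplit]; simpa using hlen)
    refine ⟨(m + k) % v.length, Nat.mod_lt _ hvpos, ?_⟩
    rw [hsplit, heq, List.rotate_rotate, ← List.rotate_mod]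
  by_cases hx1 : x = (c.1, !c.2)
  · apply step 1
    have hrot1 : (c :: tl).rotate 1 = tl ++ [c] := by
      rw [List.rotate_eq_drop_append_take (by simp)]; simp
    rw [hvc, hx1, conj_head, hrot1]
  · by_cases hx2 : x = v.getLast hv
    · apply step (v.length - 1)
      obtain ⟨d, hvd⟩ : ∃ d, v = d ++ [x] :=
        ⟨v.dropLast, by rw [hx2]; exact (List.dropLast_append_getLast hv).symm⟩
      rw [hvd]
      exact conj_last' x d
    · -- no cancellation: contradiction with length bound
      exfalso
      have hjunc1 : ∀ a ∈ gw.getLast?, ∀ b ∈ (v ++ invRev gw).head?, NC a b := by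
        intro a ha b hb
        simp only [List.getLast?_eq_getLast (l := gw) hne, Option.mem_def,
          Option.some.injEq] at ha
        rw [hvc, List.cons_append] at hb
        simp only [List.head?_cons, Option.mem_def, Option.some.injEq] at hb
        subst ha; subst hb
        intro h1
        by_contra h2
        exact hx1 (Prod.ext h1 (by revert h2; cases x.2 <;> cases c.2 <;> simp))
      have hinvgw : invRev gw = (x.1, !x.2) :: invRev t := by
        rw [← hts, invRev_append', invRev_singleton]; rfl
      have hjunc2 : ∀ a ∈ v.getLast?, ∀ b ∈ (invRev gw).head?, NC a b := by
        intro a ha b hb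
        simp only [List.getLast?_eq_getLast (l := v) hv, Option.mem_def,
          Option.some.injEq] at ha
        rw [hinvgw] at hb
        simp only [List.head?_cons, Option.mem_def, Option.some.injEq] at hb
        subst ha; subst hb
        intro h1
        by_contra h2
        have hlx : v.getLast hv = x :=
          Prod.ext h1 (by revert h2; cases x.2 <;> cases (v.getLast hv).2 <;> simp)
        exact hx2 hlx.symm
      have hA : List.Chain' NC (gw ++ (v ++ invRev gw)) :=
        List.isChain_append.2 ⟨hchain,
          List.isChain_append.2 ⟨(List.isChain_append.1 hcr).1, chain'_invRev hchain, hjunc2⟩,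
          hjunc1⟩
      have hmk : g * mk v * g⁻¹ = mk (gw ++ (v ++ invRev gw)) := by
        conv_lhs => rw [← mk_toWord (x := g)]
        rw [inv_mk, mul_mk, mul_mk, List.append_assoc]
      have hlenA : (g * mk v * g⁻¹).toWord.length = gw.length + v.length + gw.length := by
        rw [hmk, toWord_mk, reduce_eq_self_of_chain' hA]
        simp [invRev_length]
        omega
      have : 1 ≤ gw.length := List.length_pos_iff.2 hne
      omega

end Aux

section Words


/-- double every letter -/
def dbl {α : Type*} (l : List α) : List α := l.flatMap (fun a => [a, a])

lemma dbl_nil {α : Type*} : dbl ([] : List α) = [] := rfl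
lemma dbl_cons {α : Type*} (a : α) (l : List α) : dbl (a :: l) = a :: a :: dbl l := rfl

lemma dbl_append {α : Type*} (l₁ l₂ : List α) : dbl (l₁ ++ l₂) = dbl l₁ ++ dbl l₂ := by
  simp [dbl]

lemma dbl_length {α : Type*} (l : List α) : (dbl l).length = 2 * l.length := by
  induction l with
  | nil => rfl
  | cons a l ih => rw [dbl_cons]; simp [ih]; omega

lemma dbl_map {α β : Type*} (f : α → β) (l : List α) : dbl (l.map f) = (dbl l).map f := by
  induction l with
  | nil => rfl
  | cons a l ih => simp [dbl_cons, ih]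

lemma dbl_getElem {α : Type*} (l : List α) (p : ℕ) (hp : p < (dbl l).length)
    (hp2 : p / 2 < l.length) : (dbl l)[p] = l[p / 2] := by
  induction l generalizing p with
  | nil => simp [dbl_length] at hp
  | cons a l ih =>
    simp only [dbl_cons] at hp ⊢
    match p with
    | 0 => simp
    | 1 => simp
    | (q + 2) =>
      have h1 : (q + 2) / 2 = q / 2 + 1 := by omega
      have hlt : q / 2 < l.length := by simp [h1] at hp2; omega
      have h2 : (a :: l)[(q+2)/2]'hp2 = l[q/2]'hlt := by simp [h1]
      rw [h2]
      simp only [List.getElem_cons_succ]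
      exact ih q (by simpa using hp) hlt

lemma dbl_injective {α : Type*} : Function.Injective (dbl (α := α)) := by
  intro l₁ l₂ h
  induction l₁ generalizing l₂ with
  | nil => cases l₂ with
    | nil => rfl
    | cons b m => simp [dbl_nil, dbl_cons] at h
  | cons a l ih =>
    cases l₂ with
    | nil => simp [dbl_nil, dbl_cons] at h
    | cons b m =>
      rw [dbl_cons, dbl_cons] at h
      injection h with h1 h2
      injection h2 with _ h3
      rw [h1, ih h3]

lemma chain'_dbl {α : Type*} {l : List (α × Bool)}
    (h : List.Chain' (fun a b => a.1 ≠ b.1) l) : List.Chain' NC (dbl l) := by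
  induction l with
  | nil => constructor
  | cons a l ih =>
    rw [dbl_cons]
    refine List.isChain_cons_cons.2 ⟨fun _ => rfl, ?_⟩
    cases l with
    | nil => simp [dbl_nil]
    | cons b m =>
      rw [dbl_cons]
      refine List.isChain_cons_cons.2 ⟨?_, ih (List.isChain_cons_cons.1 h).2⟩
      intro h1
      exact absurd h1 (List.isChain_cons_cons.1 h).1

/-- The element `a₁^(2ε₁) a₂^(2ε₂) ⋯ a₁^(2ε_{2j-1}) a₂^(2ε_{2j})` of the free
group on two generators, where `ε i = true` stands for exponent `+2` and
`ε i = false` for exponent `-2`. -/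
def altWord (j : ℕ) (ε : Fin (2 * j) → Bool) : FreeGroup (Fin 2) :=
  ((List.finRange (2 * j)).map fun i : Fin (2 * j) =>
    FreeGroup.of (if (i : ℕ) % 2 = 0 then (0 : Fin 2) else 1) ^
      (if ε i then (2 : ℤ) else -2)).prod



def gen (m : ℕ) : Fin 2 := if m % 2 = 0 then 0 else 1

def pat (j : ℕ) (ε : Fin (2 * j) → Bool) : List (Fin 2 × Bool) :=
  (List.finRange (2 * j)).map fun i : Fin (2 * j) => (gen i.1, ε i)

def gpat (j : ℕ) : List (Fin 2) := (List.finRange (2 * j)).map fun i : Fin (2 * j) => gen i.1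

def Wd (j : ℕ) (ε : Fin (2 * j) → Bool) : List (Fin 2 × Bool) := dbl (pat j ε)

lemma pat_length (j ε) : (pat j ε).length = 2 * j := by simp [pat]

lemma Wd_length (j ε) : (Wd j ε).length = 4 * j := by
  rw [Wd, dbl_length, pat_length]; ring

lemma zpow_two_mk (a : Fin 2) (b : Bool) :
    (FreeGroup.of a : FreeGroup (Fin 2)) ^ (if b then (2 : ℤ) else -2) = mk [(a, b), (a, b)] := by
  have hof : (FreeGroup.of a : FreeGroup (Fin 2)) = mk [(a, true)] := rfl
  cases b
  · have : ((-2 : ℤ)) = -(((2 : ℕ) : ℤ)) := by norm_num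
    rw [if_neg (by simp), this, zpow_neg, zpow_natCast, pow_two, hof, mul_mk, inv_mk]
    simp [invRev]
  · have : ((2 : ℤ)) = (((2 : ℕ) : ℤ)) := by norm_num
    rw [if_pos rfl, this, zpow_natCast, pow_two, hof, mul_mk]
    rfl

lemma prod_mk {β : Type*} (l : List β) (f : β → List (Fin 2 × Bool)) :
    (l.map fun b => (mk (f b) : FreeGroup (Fin 2))).prod = mk (l.flatMap f) := by
  induction l with
  | nil =>
    simp only [List.map_nil, List.prod_nil, List.flatMap_nil]
    rw [← FreeGroup.toWord_one (α := Fin 2), mk_toWord]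
  | cons a l ih => simp only [List.map_cons, List.prod_cons, List.flatMap_cons, ih, mul_mk]

lemma altWord_eq (j ε) : altWord j ε = mk (Wd j ε) := by
  rw [altWord]
  have h1 : ∀ i : Fin (2 * j),
      (FreeGroup.of (if (i : ℕ) % 2 = 0 then (0 : Fin 2) else 1) ^ (if ε i then (2 : ℤ) else -2))
        = mk [(gen i.1, ε i), (gen i.1, ε i)] := fun i => zpow_two_mk _ _
  rw [List.map_congr_left fun i _ => h1 i, prod_mk]
  congr 1
  rw [Wd, pat]
  induction (List.finRange (2 * j)) with
  | nil => rfl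
  | cons a l ih => simp only [List.flatMap_cons, List.map_cons, dbl_cons, ih]; rfl

lemma gen_ne {a b : ℕ} (h : a % 2 ≠ b % 2) : gen a ≠ gen b := by
  unfold gen
  split_ifs with h1 h2 h2 <;> simp_all <;> omega

lemma pat_getElem (j ε) (i : ℕ) (hi : i < (pat j ε).length) :
    (pat j ε)[i] = (gen i, ε ⟨i, by simpa [pat_length] using hi⟩) := by
  simp only [pat, List.getElem_map, List.getElem_finRange]
  rfl

lemma gpat_length (j : ℕ) : (gpat j).length = 2 * j := by simp [gpat]

lemma gpat_getElem (j : ℕ) (q : ℕ) (hq : q < (gpat j).length) : (gpat j)[q] = gen q := by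
  simp only [gpat, List.getElem_map, List.getElem_finRange]
  rfl

lemma chain'_pat2 (j : ℕ) (hj : 0 < j) (ε : Fin (2 * j) → Bool) :
    List.Chain' (fun a b : Fin 2 × Bool => a.1 ≠ b.1) (pat j ε ++ pat j ε) := by
  rw [List.Chain', List.isChain_iff_getElem]
  intro i hi
  simp only [List.length_append, pat_length] at hi
  have hlen : (pat j ε ++ pat j ε).length = 4 * j := by simp [pat_length]; ring
  have hget : ∀ (p : ℕ) (hp : p < 4 * j),
      (pat j ε ++ pat j ε)[p]'(by simp [pat_length]; omega) =
        if hc : p < 2 * j then (pat j ε)[p]'(by simp [pat_length]; omega)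
        else (pat j ε)[p - 2 * j]'(by simp [pat_length]; omega) := by
    intro p hp
    by_cases hc : p < 2 * j
    · rw [dif_pos hc, List.getElem_append_left (by simp [pat_length]; omega)]
    · rw [dif_neg hc,
        List.getElem_append_right (by simp [pat_length]; omega)]
      congr 1
      simp [pat_length]
  rw [hget i (by omega), hget (i + 1) (by omega)]
  split_ifs with h1 h2 h2
  · rw [pat_getElem, pat_getElem]
    exact gen_ne (by omega)
  · rw [pat_getElem, pat_getElem]
    dsimp only
    have hi2 : i = 2 * j - 1 := by omega
    have : i + 1 - 2 * j = 0 := by omega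
    rw [this, hi2]
    exact gen_ne (by omega)
  · omega
  · rw [pat_getElem, pat_getElem]
    exact gen_ne (by omega)

lemma chain'_Wd2 (j : ℕ) (hj : 0 < j) (ε : Fin (2 * j) → Bool) :
    List.Chain' NC (Wd j ε ++ Wd j ε) := by
  rw [Wd, ← dbl_append]
  exact chain'_dbl (chain'_pat2 j hj ε)

lemma pat_injective (j : ℕ) : Function.Injective (pat j) := by
  intro ε₁ ε₂ h
  funext i
  have hlen1 : (i : ℕ) < (pat j ε₁).length := by rw [pat_length]; exact i.2
  have hlen2 : (i : ℕ) < (pat j ε₂).length := by rw [pat_length]; exact i.2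
  have h1 : (pat j ε₁)[(i : ℕ)]'hlen1 = (pat j ε₂)[(i : ℕ)]'hlen2 :=
    List.getElem_of_eq h hlen1
  rw [pat_getElem, pat_getElem] at h1
  have h2 := congrArg Prod.snd h1
  simpa using h2

lemma Wd_injective (j : ℕ) : Function.Injective (Wd j) :=
  fun _ _ h => pat_injective j (dbl_injective h)

lemma gen_eq_mod {a b : ℕ} (h : gen a = gen b) : a % 2 = b % 2 := by
  by_contra hne
  exact gen_ne hne h

lemma rot_even (j : ℕ) (hj : 0 < j) (ε ε' : Fin (2 * j) → Bool) (k : ℕ) (hk : k < 4 * j)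
    (h : Wd j ε = (Wd j ε').rotate k) : k % 2 = 0 := by
  have hG : ∀ ε₀ : Fin (2 * j) → Bool,
      (Wd j ε₀).map Prod.fst = dbl (gpat j) := by
    intro ε₀
    rw [Wd, ← dbl_map, pat, gpat, List.map_map]
    rfl
  have hGlen : (dbl (gpat j)).length = 4 * j := by rw [dbl_length, gpat_length]; ring
  have hrot : dbl (gpat j) = (dbl (gpat j)).rotate k := by
    have := congrArg (List.map Prod.fst) h
    rw [hG ε, List.map_rotate, hG ε'] at this
    exact this
  have hGget : ∀ (p : ℕ) (hp : p < 4 * j), (dbl (gpat j))[p]'(by omega) = gen (p / 2) := by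
    intro p hp
    rw [dbl_getElem _ _ (by omega) (by rw [gpat_length]; omega), gpat_getElem]
  have key : ∀ (p : ℕ) (hp : p < 4 * j), gen (p / 2) = gen (((p + k) % (4 * j)) / 2) := by
    intro p hp
    have hh : p < ((dbl (gpat j)).rotate k).length := by rw [List.length_rotate]; omega
    have h1 : ((dbl (gpat j)).rotate k)[p]'hh
        = (dbl (gpat j))[(p + k) % (dbl (gpat j)).length]'(by
            rw [hGlen]; exact Nat.mod_lt _ (by omega)) := by
      rw [List.getElem_rotate]
    have h2 : (dbl (gpat j))[p]'(by omega) = ((dbl (gpat j)).rotate k)[p]'hh :=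
      List.getElem_of_eq hrot _
    have h3 : (p + k) % (dbl (gpat j)).length = (p + k) % (4 * j) := by rw [hGlen]
    rw [hGget p hp] at h2
    rw [h2, h1]
    have h4 : ∀ (m m' : ℕ) (hm : m < 4 * j) (he : m = m'),
        (dbl (gpat j))[m]'(by omega) = gen (m' / 2) := by
      intro m m' hm he
      subst he
      exact hGget m hm
    exact h4 _ _ (by rw [h3]; exact Nat.mod_lt _ (by omega)) h3
  have e0 := gen_eq_mod (key 0 (by omega))
  have e1 := gen_eq_mod (key 1 (by omega))
  simp only [Nat.zero_add, Nat.zero_div] at e0 e1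
  have d4 : (4 : ℕ) ∣ 4 * j := ⟨j, rfl⟩
  have m0 : (k % (4 * j)) % 4 = k % 4 := Nat.mod_mod_of_dvd k d4
  have m1 : ((1 + k) % (4 * j)) % 4 = (1 + k) % 4 := Nat.mod_mod_of_dvd (1 + k) d4
  generalize hA : k % (4 * j) = A at e0 m0
  generalize hB : (1 + k) % (4 * j) = B at e1 m1
  omega
lemma toWord_altWord (j : ℕ) (hj : 0 < j) (ε : Fin (2 * j) → Bool) :
    (altWord j ε).toWord = Wd j ε := by
  rw [altWord_eq, toWord_mk,
    reduce_eq_self_of_chain' ((List.isChain_append.1 (chain'_Wd2 j hj ε)).1)]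

lemma conj_to_rotate (j : ℕ) (hj : 0 < j) (ε ε' : Fin (2 * j) → Bool)
    (h : IsConj (altWord j ε') (altWord j ε)) :
    ∃ k, k < 4 * j ∧ k % 2 = 0 ∧ Wd j ε = (Wd j ε').rotate k := by
  obtain ⟨c, hc⟩ := isConj_iff.1 h
  have hWne : Wd j ε' ≠ [] := by
    have : 0 < (Wd j ε').length := by rw [Wd_length]; omega
    exact List.length_pos_iff.1 this
  have hcr := chain'_Wd2 j hj ε'
  have hlen : (c * mk (Wd j ε') * c⁻¹).toWord.length ≤ (Wd j ε').length := by
    rw [← altWord_eq, hc, toWord_altWord j hj, Wd_length, Wd_length]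
  obtain ⟨k, hk, heq⟩ := conj_cyclic (c.toWord.length) c (Wd j ε') rfl hWne hcr hlen
  have h2 : altWord j ε = mk ((Wd j ε').rotate k) := by
    rw [← hc, altWord_eq]; exact heq
  have hrotred : FreeGroup.reduce ((Wd j ε').rotate k) = (Wd j ε').rotate k :=
    reduce_eq_self_of_chain' ((List.isChain_append.1 (chain'_rotate_doubled hcr k)).1)
  have h3 : Wd j ε = (Wd j ε').rotate k := by
    have h4 := congrArg FreeGroup.toWord h2
    rw [toWord_altWord j hj, toWord_mk, hrotred] at h4
    exact h4
  rw [Wd_length] at hk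
  exact ⟨k, hk, rot_even j hj ε ε' k hk h3, h3⟩

lemma conj_bound (j : ℕ) (hj : 0 < j) (ε : Fin (2 * j) → Bool) :
    Nat.card {ε' : Fin (2 * j) → Bool // IsConj (altWord j ε') (altWord j ε)} ≤ 2 * j := by
  have hf : ∀ s : {ε' : Fin (2 * j) → Bool // IsConj (altWord j ε') (altWord j ε)},
      ∃ k, k < 4 * j ∧ k % 2 = 0 ∧ Wd j ε = (Wd j s.1).rotate k :=
    fun s => conj_to_rotate j hj ε s.1 s.2
  classical
  set f : {ε' : Fin (2 * j) → Bool // IsConj (altWord j ε') (altWord j ε)} → Fin (2 * j) :=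
    fun s => ⟨(hf s).choose / 2, by have := (hf s).choose_spec.1; omega⟩ with hfdef
  have hinj : Function.Injective f := by
    intro s₁ s₂ hf12
    obtain ⟨hk1, he1, hr1⟩ := (hf s₁).choose_spec
    obtain ⟨hk2, he2, hr2⟩ := (hf s₂).choose_spec
    have hdiv : (hf s₁).choose / 2 = (hf s₂).choose / 2 := by
      have := congrArg Fin.val hf12
      simpa [hfdef] using this
    have hkk : (hf s₁).choose = (hf s₂).choose := by omega
    have hR : (Wd j s₁.1).rotate ((hf s₁).choose) = (Wd j s₂.1).rotate ((hf s₁).choose) :=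
      (hr1.symm.trans hr2).trans (congrArg (fun m => (Wd j s₂.1).rotate m) hkk.symm)
    have := List.rotate_injective _ hR
    exact Subtype.ext (Wd_injective j this)
  calc Nat.card {ε' : Fin (2 * j) → Bool // IsConj (altWord j ε') (altWord j ε)}
      ≤ Nat.card (Fin (2 * j)) := Nat.card_le_card_of_injective f hinj
    _ = 2 * j := by simp

theorem stmt_16 (j : ℕ) (hj : 2 ≤ j) :
    (∀ ε : Fin (2 * j) → Bool,
      Nat.card {ε' : Fin (2 * j) → Bool // IsConj (altWord j ε') (altWord j ε)} ≤
        2 * j) ∧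
    ((2 : ℝ) ^ (2 * j) / (2 * j) ≤
      (Set.range fun ε : Fin (2 * j) → Bool => ConjClasses.mk (altWord j ε)).ncard) := by
  have hj0 : 0 < j := by omega
  constructor
  · exact fun ε => conj_bound j hj0 ε
  · classical
    set F : (Fin (2 * j) → Bool) → ConjClasses (FreeGroup (Fin 2)) :=
      fun ε => ConjClasses.mk (altWord j ε) with hF
    have hfib : ∀ a ∈ Finset.univ.image F,
        (Finset.univ.filter (fun x => F x = a)).card ≤ 2 * j := by
      intro a ha
      obtain ⟨ε₀, _, rfl⟩ := Finset.mem_image.1 ha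
      have h1 : (Finset.univ.filter (fun x => F x = F ε₀)).card
          = Fintype.card {x : Fin (2 * j) → Bool // F x = F ε₀} := by
        rw [Fintype.card_subtype]
      have h2 : Fintype.card {x : Fin (2 * j) → Bool // F x = F ε₀}
          = Fintype.card {x : Fin (2 * j) → Bool // IsConj (altWord j x) (altWord j ε₀)} :=
        Fintype.card_congr (Equiv.subtypeEquivRight fun x => by
          rw [hF]; exact ConjClasses.mk_eq_mk_iff_isConj)
      have h3 := conj_bound j hj0 ε₀
      rw [Nat.card_eq_fintype_card] at h3
      omega
    have h0 := Finset.card_le_mul_card_image (f := F) Finset.univ (2 * j) hfib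
    have hcard : (Finset.univ : Finset (Fin (2 * j) → Bool)).card = 2 ^ (2 * j) := by
      simp [Finset.card_univ]
    rw [hcard] at h0
    have hrange : (Set.range F).ncard = (Finset.univ.image F).card := by
      have hco : (↑(Finset.univ.image F) : Set (ConjClasses (FreeGroup (Fin 2)))) = Set.range F := by
        rw [Finset.coe_image, Finset.coe_univ, Set.image_univ]
      rw [← hco, Set.ncard_coe_finset]
    have hjpos : (0 : ℝ) < 2 * j := by positivity
    rw [div_le_iff₀ hjpos]
    have : ((2 : ℝ)) ^ (2 * j) ≤ (2 * j : ℕ) * ((Finset.univ.image F).card : ℝ) := by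
      exact_mod_cast h0
    rw [hrange]
    push_cast at this ⊢
    linarith
end Words
end

section
/- For real $Y \geq \log 3$, let $N(Y)$ denote the number of nonempty reduced words $w$ in the free group on $a_1, a_2$ such that $\sum_k \log(3 d_k) \leq Y$, where the sum runs over the degrees $d_k$ of the syllables of $w$. Then $N(Y) \leq \frac{1}{2} e^{3Y}$, and $N(Y) = 0$ for $0 < Y < \log 3$. -/
/-- A list of terms `(generator index, exponent)` is a reduced word in the free
group on two generators: all exponents are nonzero and consecutive terms are
powers of different generators. -/
def IsReducedWord (w : List (Fin 2 × ℤ)) : Prop :=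
  (∀ p ∈ w, p.2 ≠ 0) ∧ w.Chain' fun p q => p.1 ≠ q.1

/-- The syllable decomposition of a word: terms with exponent of absolute value
at least `2` are syllables by themselves, and maximal runs of consecutive terms
whose exponents are all `+1`, or all `-1`, are syllables. -/
def syllables (w : List (Fin 2 × ℤ)) : List (List (Fin 2 × ℤ)) :=
  w.splitBy fun p q => (p.2 == 1 && q.2 == 1) || (p.2 == -1 && q.2 == -1)

/-- The degree of a syllable: the sum of the absolute values of the exponents of
its terms. -/
def syllableDegree (s : List (Fin 2 × ℤ)) : ℕ :=
  (s.map fun p => p.2.natAbs).sum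

namespace Stmt18

def altL : Fin 2 → ℤ → ℕ → List (Fin 2 × ℤ)
  | _, _, 0 => []
  | g, e, n+1 => (g, e) :: altL (g+1) e n

def recon : ℕ × Fin 2 × Bool × Bool → List (Fin 2 × ℤ)
  | (d, g, pos, one) =>
    if one then [(g, if pos then (d : ℤ) else -(d : ℤ))]
    else altL g (if pos then 1 else -1) d

def sylCode (s : List (Fin 2 × ℤ)) : ℕ × Fin 2 × Bool × Bool :=
  (syllableDegree s, s.headI.1, decide (0 < s.headI.2), s.length == 1)

lemma fin2_flip : ∀ g h : Fin 2, g ≠ h → h = g + 1 := by decide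

lemma altL_eq : ∀ (s : List (Fin 2 × ℤ)) (e : ℤ), s.Chain' (fun p q => p.1 ≠ q.1) →
    (∀ x ∈ s, x.2 = e) → altL s.headI.1 e s.length = s
  | [], _, _, _ => rfl
  | a :: t, e, hc, he => by
    have ha : a.2 = e := he a (List.mem_cons_self)
    simp only [List.headI_cons, List.length_cons]
    rw [altL]
    have hcons : (a.1, e) = a := by rw [← ha]
    rcases t with _ | ⟨b, t'⟩
    · simp [altL, hcons]
    · simp only [List.Chain', List.isChain_cons_cons] at hc
      have hb1 : b.1 = a.1 + 1 := fin2_flip _ _ hc.1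
      have ih := altL_eq (b :: t') e hc.2 (fun x hx => he x (List.mem_cons_of_mem _ hx))
      simp only [List.headI_cons] at ih
      rw [← hb1, ih, hcons]

lemma chain_const : ∀ (s : List (Fin 2 × ℤ)),
    (s.Chain' fun p q => ((p.2 == 1 && q.2 == 1) || (p.2 == -1 && q.2 == -1)) = true) →
    ∀ x ∈ s, x.2 = s.headI.2
  | [], _, _, hx => absurd hx (List.not_mem_nil)
  | a :: t, hc, x, hx => by
    rcases List.mem_cons.1 hx with rfl | hx'
    · rfl
    · rcases t with _ | ⟨b, t'⟩
      · exact absurd hx' (List.not_mem_nil)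
      · simp only [List.Chain', List.isChain_cons_cons] at hc
        have h1 := chain_const (b :: t') hc.2 x hx'
        simp only [List.headI_cons] at h1 ⊢
        have h2 : b.2 = a.2 := by
          have := hc.1
          simp only [Bool.or_eq_true, Bool.and_eq_true, beq_iff_eq] at this
          rcases this with ⟨h, h'⟩ | ⟨h, h'⟩ <;> omega
        rw [h1, h2]

lemma recon_sylCode {w s : List (Fin 2 × ℤ)} (hred : IsReducedWord w)
    (hs : s ∈ syllables w) : recon (sylCode s) = s := by
  have h1 : s ≠ [] := List.ne_nil_of_mem_splitBy hs
  have hflat : (syllables w).flatten = w := List.flatten_splitBy _ w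
  have h2 : s <:+: w := hflat ▸ List.infix_of_mem_flatten hs
  have h3 : s.Chain' (fun p q => p.1 ≠ q.1) := hred.2.infix h2
  have h4 : ∀ p ∈ s, p.2 ≠ 0 := fun p hp => hred.1 p (h2.subset hp)
  have h5 := List.isChain_of_mem_splitBy hs
  rcases s with _ | ⟨a, t⟩
  · exact absurd rfl h1
  rcases t with _ | ⟨b, t'⟩
  · -- singleton
    have hdeg : syllableDegree [a] = a.2.natAbs := by simp [syllableDegree]
    have hnz : a.2 ≠ 0 := h4 a (List.mem_cons_self)
    simp only [sylCode, hdeg, List.headI_cons, List.length_cons, List.length_nil]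
    rw [recon]
    simp only [show ((0 + 1 : ℕ) == 1) = true from rfl, if_true]
    have : (if decide (0 < a.2) then (a.2.natAbs : ℤ) else -(a.2.natAbs : ℤ)) = a.2 := by
      by_cases hp : 0 < a.2
      · rw [decide_eq_true hp, if_pos rfl]; omega
      · rw [decide_eq_false hp, if_neg (by simp)]; omega
    exact congrArg (fun v => [(a.1, v)]) this
  · -- length ≥ 2
    have hall : ∀ x ∈ a :: b :: t', x.2 = a.2 := by
      have := chain_const _ h5
      simpa using this
    have hpm : a.2 = 1 ∨ a.2 = -1 := by
      rw [List.isChain_cons_cons] at h5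
      have := h5.1
      simp only [Bool.or_eq_true, Bool.and_eq_true, beq_iff_eq] at this
      rcases this with ⟨h, _⟩ | ⟨h, _⟩ <;> [left; right] <;> exact h
    have hdeg : syllableDegree (a :: b :: t') = (a :: b :: t').length := by
      unfold syllableDegree
      have hrep : ((a :: b :: t').map fun p => p.2.natAbs) =
          List.replicate (a :: b :: t').length 1 := by
        rw [List.eq_replicate_iff]
        refine ⟨by simp, ?_⟩
        intro x hx
        obtain ⟨p, hp, rfl⟩ := List.mem_map.1 hx
        have := hall p hp
        rcases hpm with h | h <;> rw [this, h] <;> rfl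
      rw [hrep, List.sum_replicate, smul_eq_mul, mul_one]
    have hlen : (((a :: b :: t').length == 1)) = false := by
      rw [beq_eq_false_iff_ne]
      simp
    simp only [sylCode, List.headI_cons, hlen, hdeg]
    rw [recon, if_neg (by simp)]
    have key : ∀ e : ℤ, a.2 = e →
        altL a.1 e (a :: b :: t').length = a :: b :: t' := by
      intro e he
      have := altL_eq (a :: b :: t') e h3 (fun x hx => (hall x hx).trans he)
      simpa using this
    rcases hpm with h | h
    · simp only [h, show (0:ℤ) < 1 from by norm_num, decide_true]
      rw [if_pos trivial]
      exact key 1 h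
    · simp only [h, show ¬ (0:ℤ) < -1 from by norm_num, decide_false]
      rw [if_neg (by simp)]
      exact key (-1) h

end Stmt18

namespace Stmt18

lemma syllables_flatten (w : List (Fin 2 × ℤ)) : (syllables w).flatten = w :=
  List.flatten_splitBy _ w

lemma syllables_ne_nil {w : List (Fin 2 × ℤ)} (hw : w ≠ []) : syllables w ≠ [] := by
  intro h
  apply hw
  rw [← syllables_flatten w, h, List.flatten_nil]

lemma mem_syllables_facts {w s : List (Fin 2 × ℤ)} (hred : IsReducedWord w)
    (hs : s ∈ syllables w) : s ≠ [] ∧ (∀ p ∈ s, p.2 ≠ 0) := by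
  have h1 : s ≠ [] := List.ne_nil_of_mem_splitBy hs
  have h2 : s <:+: w := syllables_flatten w ▸ List.infix_of_mem_flatten hs
  exact ⟨h1, fun p hp => hred.1 p (h2.subset hp)⟩

lemma length_le_deg : ∀ s : List (Fin 2 × ℤ), (∀ p ∈ s, p.2 ≠ 0) →
    s.length ≤ syllableDegree s
  | [], _ => le_refl 0
  | a :: t, h => by
    have h1 : a.2.natAbs ≥ 1 := by
      have := h a (List.mem_cons_self); omega
    have h2 := length_le_deg t (fun p hp => h p (List.mem_cons_of_mem _ hp))
    simp only [List.length_cons, syllableDegree, List.map_cons, List.sum_cons] at *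
    omega

lemma one_le_deg {s : List (Fin 2 × ℤ)} (hne : s ≠ []) (hnz : ∀ p ∈ s, p.2 ≠ 0) :
    1 ≤ syllableDegree s := by
  have := length_le_deg s hnz
  have : 1 ≤ s.length := by
    rcases s with _ | ⟨a, t⟩
    · exact absurd rfl hne
    · simp
  omega

def codeSig (w : List (Fin 2 × ℤ)) : Σ j : ℕ, Fin j → ℕ × Fin 2 × Bool × Bool :=
  ⟨((syllables w).map sylCode).length, ((syllables w).map sylCode).get⟩

lemma map_recon_map_sylCode {w : List (Fin 2 × ℤ)} (hred : IsReducedWord w) :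
    ((syllables w).map sylCode).map recon = syllables w := by
  rw [List.map_map]
  have : ∀ s ∈ syllables w, (recon ∘ sylCode) s = id s :=
    fun s hs => recon_sylCode hred hs
  rw [List.map_congr_left this, List.map_id]

lemma codeSig_inj {w w' : List (Fin 2 × ℤ)} (h : IsReducedWord w) (h' : IsReducedWord w')
    (he : codeSig w = codeSig w') : w = w' := by
  set l := (syllables w).map sylCode with hl
  set l' := (syllables w').map sylCode with hl'
  have hlen : l.length = l'.length := congrArg Sigma.fst he
  have hfun : HEq l.get l'.get := (Sigma.mk.inj_iff.1 he).2
  have hget := (Fin.heq_fun_iff hlen).1 hfun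
  have hll : l = l' := by
    apply List.ext_get hlen
    intro n h1 h2
    exact hget ⟨n, h1⟩
  have hsyl : syllables w = syllables w' := by
    rw [← map_recon_map_sylCode h, ← map_recon_map_sylCode h']
    exact congrArg (List.map recon) hll
  rw [← syllables_flatten w, ← syllables_flatten w', hsyl]

lemma exp_list_sum : ∀ L : List ℝ, (L.map Real.exp).prod = Real.exp L.sum
  | [] => by simp
  | a :: t => by
    simp only [List.map_cons, List.prod_cons, List.sum_cons, Real.exp_add, exp_list_sum t]

lemma one_le_listprod : ∀ L : List ℝ, (∀ x ∈ L, (1:ℝ) ≤ x) → 1 ≤ L.prod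
  | [], _ => le_refl 1
  | a :: t, h => by
    have h1 : (1:ℝ) ≤ a := h a (List.mem_cons_self)
    have h2 := one_le_listprod t (fun x hx => h x (List.mem_cons_of_mem _ hx))
    simp only [List.prod_cons]
    nlinarith

lemma three_pow_le_prod : ∀ L : List ℝ, (∀ x ∈ L, (3:ℝ) ≤ x) → (3:ℝ)^L.length ≤ L.prod
  | [], _ => by simp
  | a :: t, h => by
    have h1 : (3:ℝ) ≤ a := h a (List.mem_cons_self)
    have h2 := three_pow_le_prod t (fun x hx => h x (List.mem_cons_of_mem _ hx))
    have h3 : (0:ℝ) ≤ 3 ^ t.length := by positivity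
    simp only [List.length_cons, List.prod_cons, pow_succ]
    calc (3:ℝ)^t.length * 3 = 3 * 3^t.length := by ring
    _ ≤ a * t.prod := by nlinarith

lemma le_listprod_of_mem : ∀ L : List ℝ, (∀ x ∈ L, (1:ℝ) ≤ x) → ∀ x ∈ L, x ≤ L.prod
  | [], _, x, hx => absurd hx (List.not_mem_nil)
  | a :: t, h, x, hx => by
    have h1 : (1:ℝ) ≤ a := h a (List.mem_cons_self)
    have h2 := one_le_listprod t (fun y hy => h y (List.mem_cons_of_mem _ hy))
    simp only [List.prod_cons]
    rcases List.mem_cons.1 hx with rfl | hx'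
    · nlinarith
    · have h3 := le_listprod_of_mem t (fun y hy => h y (List.mem_cons_of_mem _ hy)) x hx'
      have h4 : (1:ℝ) ≤ x := h x hx
      nlinarith

end Stmt18

namespace Stmt18

lemma sum_cube_inv_aux : ∀ D : ℕ, 1 ≤ D →
    ∑ d ∈ Finset.Icc 2 D, ((d:ℝ)⁻¹)^3 ≤ 1/4 - 1/(2*(D:ℝ)*((D:ℝ)+1)) := by
  intro D hD
  induction D with
  | zero => omega
  | succ n ih =>
    rcases Nat.eq_zero_or_pos n with rfl | hn
    · norm_num
    · have ihn := ih hn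
      rw [Finset.sum_Icc_succ_top (by omega : 2 ≤ n+1)]
      have hx : (1:ℝ) ≤ (n:ℝ) := by exact_mod_cast hn
      have key : (((n+1:ℕ):ℝ)⁻¹)^3 ≤
          1/(2*(n:ℝ)*((n:ℝ)+1)) - 1/(2*((n:ℝ)+1)*((n:ℝ)+2)) := by
        push_cast
        have hcomb : 1/(2*(n:ℝ)*((n:ℝ)+1)) - 1/(2*((n:ℝ)+1)*((n:ℝ)+2))
            = 1/((n:ℝ)*((n:ℝ)+1)*((n:ℝ)+2)) := by
          field_simp
          ring
        rw [hcomb, inv_pow, inv_eq_one_div, div_le_div_iff₀ (by positivity) (by positivity)]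
        nlinarith
      push_cast at ihn key ⊢
      have h48 : (2:ℝ)*((n:ℝ)+1)*((n:ℝ)+1+1) = 2*((n:ℝ)+1)*((n:ℝ)+2) := by ring
      rw [h48]
      linarith

lemma sum_cube_inv (D : ℕ) : ∑ d ∈ Finset.Icc 2 D, ((d:ℝ)⁻¹)^3 ≤ 1/4 := by
  rcases Nat.eq_zero_or_pos D with rfl | hD
  · simp
  · have h := sum_cube_inv_aux D hD
    have h2 : (0:ℝ) ≤ 1/(2*(D:ℝ)*((D:ℝ)+1)) := by positivity
    linarith

def elemSet (D : ℕ) : Finset (ℕ × Fin 2 × Bool × Bool) :=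
  ((Finset.Icc 1 D) ×ˢ (Finset.univ : Finset (Fin 2 × Bool × Bool))).filter
    (fun a => a.1 = 1 → a.2.2.2 = true)

noncomputable def wt (a : ℕ × Fin 2 × Bool × Bool) : ℝ := ((3 * (a.1:ℝ))⁻¹)^3

lemma wt_nonneg (a : ℕ × Fin 2 × Bool × Bool) : 0 ≤ wt a := by
  rw [wt]; positivity

lemma q_bound (D : ℕ) : ∑ a ∈ elemSet D, wt a ≤ 2/9 := by
  rw [elemSet, Finset.sum_filter, Finset.sum_product]
  have hinner : ∀ d ∈ Finset.Icc 1 D,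
      (∑ z : Fin 2 × Bool × Bool, if ((d, z).1 = 1 → (d, z).2.2.2 = true) then wt (d, z) else 0)
      ≤ (if d = 1 then (4:ℝ)/27 else 8 * ((3*(d:ℝ))⁻¹)^3) := by
    intro d _
    by_cases hd : d = 1
    · subst hd
      have : ∀ z : Fin 2 × Bool × Bool,
          (if (((1:ℕ), z).1 = 1 → ((1:ℕ), z).2.2.2 = true) then wt (1, z) else 0)
          = (if z.2.2 = true then (1/27 : ℝ) else 0) := by
        intro z
        have hw : wt ((1:ℕ), z) = 1/27 := by
          rw [wt]; norm_num
        by_cases hz : z.2.2 = true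
        · rw [if_pos (fun _ => hz), if_pos hz, hw]
        · rw [if_neg (by simp [hz]), if_neg hz]
      rw [Finset.sum_congr rfl (fun z _ => this z), ← Finset.sum_filter, Finset.sum_const]
      have hcard : ((Finset.univ : Finset (Fin 2 × Bool × Bool)).filter
          (fun z => z.2.2 = true)).card = 4 := by decide
      rw [hcard, if_pos rfl]
      norm_num
    · have : ∀ z : Fin 2 × Bool × Bool,
          (if ((d, z).1 = 1 → (d, z).2.2.2 = true) then wt (d, z) else 0) = wt (d, z) := by
        intro z
        exact if_pos (fun h => absurd h hd)
      rw [Finset.sum_congr rfl (fun z _ => this z), if_neg hd]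
      have h8 : ∑ _z : Fin 2 × Bool × Bool, ((3*(d:ℝ))⁻¹)^3 = 8 * ((3*(d:ℝ))⁻¹)^3 := by
        rw [Finset.sum_const, Finset.card_univ]
        have : Fintype.card (Fin 2 × Bool × Bool) = 8 := by decide
        rw [this, nsmul_eq_mul]
        norm_num
      calc ∑ z : Fin 2 × Bool × Bool, wt (d, z)
          = ∑ _z : Fin 2 × Bool × Bool, ((3*(d:ℝ))⁻¹)^3 := rfl
        _ = 8 * ((3*(d:ℝ))⁻¹)^3 := h8
        _ ≤ 8 * ((3*(d:ℝ))⁻¹)^3 := le_refl _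
  calc _ ≤ ∑ d ∈ Finset.Icc 1 D, (if d = 1 then (4:ℝ)/27 else 8 * ((3*(d:ℝ))⁻¹)^3) :=
        Finset.sum_le_sum hinner
    _ ≤ 2/9 := by
      rcases Nat.eq_zero_or_pos D with rfl | hD
      · simp; norm_num
      · have hsplit : Finset.Icc 1 D = insert 1 (Finset.Icc 2 D) := by
          ext x; simp [Finset.mem_Icc, Finset.mem_insert]; omega
        rw [hsplit, Finset.sum_insert (by simp)]
        rw [if_pos rfl]
        have hrest : ∑ d ∈ Finset.Icc 2 D, (if d = 1 then (4:ℝ)/27 else 8 * ((3*(d:ℝ))⁻¹)^3)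
            = ∑ d ∈ Finset.Icc 2 D, (8/27) * ((d:ℝ)⁻¹)^3 := by
          apply Finset.sum_congr rfl
          intro d hd
          have hd1 : d ≠ 1 := by
            rw [Finset.mem_Icc] at hd; omega
          rw [if_neg hd1, mul_inv]
          ring
        rw [hrest, ← Finset.mul_sum]
        have := sum_cube_inv D
        nlinarith

end Stmt18

namespace Stmt18

open scoped Classical in
noncomputable def codeBox (X : ℝ) : Finset (Σ j : ℕ, Fin j → ℕ × Fin 2 × Bool × Bool) :=
  ((Finset.Icc 1 (Nat.floor X)).sigma
    (fun j => Fintype.piFinset (fun _ : Fin j => elemSet (Nat.floor X)))).filter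
    (fun x => ∏ i, (3 * ((x.2 i).1 : ℝ)) ≤ X)

lemma codeBox_card_le (X : ℝ) (hX : 3 ≤ X) : ((codeBox X).card : ℝ) ≤ 2/7 * X^3 := by
  classical
  have hX0 : (0:ℝ) < X := by linarith
  set D := Nat.floor X with hD
  have hpt : ∀ b ∈ codeBox X, (1:ℝ) ≤ X^3 * ∏ i, wt (b.2 i) := by
    intro b hb
    rw [codeBox, Finset.mem_filter, Finset.mem_sigma] at hb
    obtain ⟨⟨hj, hf⟩, hprod⟩ := hb
    rw [Fintype.mem_piFinset] at hf
    have hge : ∀ i, (3:ℝ) ≤ 3 * ((b.2 i).1 : ℝ) := by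
      intro i
      have hm := hf i
      rw [elemSet, Finset.mem_filter, Finset.mem_product, Finset.mem_Icc] at hm
      have h1 : 1 ≤ (b.2 i).1 := hm.1.1.1
      have h1' : (1:ℝ) ≤ ((b.2 i).1 : ℝ) := by exact_mod_cast h1
      linarith
    set Q := ∏ i, (3 * ((b.2 i).1 : ℝ)) with hQ
    have hQpos : 0 < Q := Finset.prod_pos (fun i _ => by linarith [hge i])
    have hwt : ∏ i, wt (b.2 i) = (Q⁻¹)^3 := by
      have : ∀ i : Fin b.1, wt (b.2 i) = ((3 * ((b.2 i).1 : ℝ))⁻¹)^3 := fun _ => rfl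
      rw [Finset.prod_congr rfl (fun i _ => this i), Finset.prod_pow, ← Finset.prod_inv_distrib]
    have hQX : Q^3 ≤ X^3 := pow_le_pow_left₀ (le_of_lt hQpos) hprod 3
    rw [hwt]
    have heq : X^3 * (Q⁻¹)^3 = X^3 / Q^3 := by
      rw [inv_pow, div_eq_mul_inv]
    rw [heq, le_div_iff₀ (by positivity), one_mul]
    exact hQX
  have hq0 : (0:ℝ) ≤ ∑ a ∈ elemSet D, wt a := Finset.sum_nonneg (fun a _ => wt_nonneg a)
  have hq := q_bound D
  have hgeo : ∑ j ∈ Finset.Icc 1 D, (∑ a ∈ elemSet D, wt a)^j ≤ 2/7 := by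
    calc ∑ j ∈ Finset.Icc 1 D, (∑ a ∈ elemSet D, wt a)^j
        ≤ ∑ j ∈ Finset.Icc 1 D, ((2:ℝ)/9)^j :=
          Finset.sum_le_sum (fun j _ => pow_le_pow_left₀ hq0 hq j)
      _ = ∑ i ∈ Finset.range (D + 1 - 1), ((2:ℝ)/9)^(1+i) := by
          rw [show Finset.Icc 1 D = Finset.Ico 1 (D+1) from by rw [Finset.Ico_add_one_right_eq_Icc],
            Finset.sum_Ico_eq_sum_range]
      _ = (2/9) * ∑ i ∈ Finset.range (D + 1 - 1), ((2:ℝ)/9)^i := by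
          rw [Finset.mul_sum]
          apply Finset.sum_congr rfl
          intro i _
          rw [pow_add, pow_one]
      _ ≤ (2/9) * (9/7) := by
          apply mul_le_mul_of_nonneg_left _ (by norm_num)
          rw [geom_sum_eq (by norm_num : (2/9 : ℝ) ≠ 1)]
          rw [div_le_iff_of_neg (by norm_num : (2/9 : ℝ) - 1 < 0)]
          have h1 : (0:ℝ) ≤ (2/9 : ℝ)^(D + 1 - 1) := by positivity
          linarith
      _ = 2/7 := by norm_num
  calc ((codeBox X).card : ℝ) = ∑ _b ∈ codeBox X, (1:ℝ) := by
        rw [Finset.sum_const, nsmul_eq_mul, mul_one]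
    _ ≤ ∑ b ∈ codeBox X, X^3 * ∏ i, wt (b.2 i) := Finset.sum_le_sum hpt
    _ = X^3 * ∑ b ∈ codeBox X, ∏ i, wt (b.2 i) := by rw [Finset.mul_sum]
    _ ≤ X^3 * ∑ b ∈ (Finset.Icc 1 D).sigma
          (fun j => Fintype.piFinset (fun _ : Fin j => elemSet D)), ∏ i, wt (b.2 i) := by
        apply mul_le_mul_of_nonneg_left _ (by positivity)
        apply Finset.sum_le_sum_of_subset_of_nonneg (Finset.filter_subset _ _)
        intro b _ _
        exact Finset.prod_nonneg (fun i _ => wt_nonneg _)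
    _ = X^3 * ∑ j ∈ Finset.Icc 1 D,
          ∑ f ∈ Fintype.piFinset (fun _ : Fin j => elemSet D), ∏ i, wt (f i) := by
        rw [Finset.sum_sigma]
    _ = X^3 * ∑ j ∈ Finset.Icc 1 D, (∑ a ∈ elemSet D, wt a)^j := by
        congr 1
        apply Finset.sum_congr rfl
        intro j _
        rw [Finset.sum_prod_piFinset, Finset.prod_const, Finset.card_univ, Fintype.card_fin]
    _ ≤ X^3 * (2/7) := mul_le_mul_of_nonneg_left hgeo (by positivity)
    _ = 2/7 * X^3 := by ring

end Stmt18

namespace Stmt18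

lemma codeSig_mem {w : List (Fin 2 × ℤ)} {Y : ℝ} (hred : IsReducedWord w) (hw : w ≠ [])
    (hsum : ((syllables w).map fun s => Real.log (3 * (syllableDegree s : ℝ))).sum ≤ Y) :
    codeSig w ∈ codeBox (Real.exp Y) := by
  classical
  set X := Real.exp Y with hX
  set D := Nat.floor X with hD
  set L := syllables w with hL
  set l := L.map sylCode with hl
  have hposdeg : ∀ s ∈ L, 1 ≤ syllableDegree s := fun s hs =>
    one_le_deg (mem_syllables_facts hred hs).1 (mem_syllables_facts hred hs).2
  have hentry : ∀ x ∈ L.map (fun s => 3 * (syllableDegree s : ℝ)), (3:ℝ) ≤ x := by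
    intro x hx
    obtain ⟨s, hs, rfl⟩ := List.mem_map.1 hx
    have h1 : (1:ℝ) ≤ (syllableDegree s : ℝ) := by exact_mod_cast hposdeg s hs
    linarith
  have hprod : (L.map fun s => 3 * (syllableDegree s : ℝ)).prod ≤ X := by
    have hmm : (L.map fun s => 3 * (syllableDegree s : ℝ))
        = (L.map fun s => Real.log (3 * (syllableDegree s : ℝ))).map Real.exp := by
      rw [List.map_map]
      apply List.map_congr_left
      intro s hs
      have h1 : (1:ℝ) ≤ (syllableDegree s : ℝ) := by exact_mod_cast hposdeg s hs
      simp only [Function.comp_apply]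
      rw [Real.exp_log (by linarith)]
    rw [hmm, exp_list_sum]
    exact Real.exp_le_exp.2 hsum
  have hLne : L ≠ [] := syllables_ne_nil hw
  have hjpos : 1 ≤ l.length := by
    rw [hl, List.length_map]
    rcases L with _ | ⟨s, t⟩
    · exact absurd rfl hLne
    · simp
  have hjle : l.length ≤ D := by
    have h3j : (3:ℝ)^l.length ≤ X := by
      have h := three_pow_le_prod _ hentry
      rw [List.length_map] at h
      rw [hl, List.length_map]
      exact le_trans h hprod
    have hjX : (l.length : ℝ) ≤ X := by
      refine le_trans ?_ h3j
      have := Nat.lt_pow_self (n := l.length) (by norm_num : 1 < 3)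
      calc (l.length : ℝ) ≤ ((3^l.length : ℕ) : ℝ) := by exact_mod_cast this.le
        _ = (3:ℝ)^l.length := by push_cast; ring
    exact Nat.le_floor hjX
  have hmem_all : ∀ a ∈ l, a ∈ elemSet D := by
    intro a ha
    obtain ⟨s, hs, rfl⟩ := List.mem_map.1 ha
    rw [elemSet, Finset.mem_filter, Finset.mem_product, Finset.mem_Icc]
    have hfacts := mem_syllables_facts hred hs
    refine ⟨⟨⟨hposdeg s hs, ?_⟩, Finset.mem_univ _⟩, ?_⟩
    · -- degree ≤ D
      have hx : 3 * ((syllableDegree s : ℕ) : ℝ) ∈ L.map (fun s => 3 * (syllableDegree s : ℝ)) :=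
        List.mem_map_of_mem hs
      have h1 := le_listprod_of_mem _ (fun x hxx => le_trans (by norm_num) (hentry x hxx)) _ hx
      have h2 : 3 * ((syllableDegree s : ℕ) : ℝ) ≤ X := le_trans h1 hprod
      have h3 : ((syllableDegree s : ℕ) : ℝ) ≤ X := by
        have : (0:ℝ) ≤ ((syllableDegree s : ℕ) : ℝ) := by positivity
        linarith
      exact Nat.le_floor h3
    · -- degree = 1 → length == 1
      intro h1
      have hlen := length_le_deg s hfacts.2
      have hlen1 : 1 ≤ s.length := by
        rcases s with _ | ⟨p, t⟩
        · exact absurd rfl hfacts.1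
        · simp
      have : s.length = 1 := by
        have h1' : syllableDegree s = 1 := h1
        omega
      simp [sylCode, this]
  refine Finset.mem_filter.2 ⟨Finset.mem_sigma.2 ⟨?_, ?_⟩, ?_⟩
  · rw [Finset.mem_Icc]
    exact ⟨hjpos, hjle⟩
  · rw [Fintype.mem_piFinset]
    intro i
    exact hmem_all _ (List.get_mem l i)
  · -- product bound
    show ∏ i : Fin l.length, (3 * ((l.get i).1 : ℝ)) ≤ X
    have heq : ∏ i : Fin l.length, (3 * ((l.get i).1 : ℝ))
        = (l.map (fun a => 3 * (a.1 : ℝ))).prod := by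
      rw [← Fin.prod_univ_fun_getElem l (fun a => 3 * (a.1 : ℝ))]
      apply Finset.prod_congr rfl
      intro i _
      rw [List.get_eq_getElem]
    rw [heq, hl, List.map_map]
    exact le_trans (le_of_eq rfl) hprod

end Stmt18

theorem stmt_18 (Y : ℝ) (hY : 0 < Y) :
    (Real.log 3 ≤ Y →
      (Nat.card {w : List (Fin 2 × ℤ) // IsReducedWord w ∧ w ≠ [] ∧
          ((syllables w).map fun s => Real.log (3 * (syllableDegree s : ℝ))).sum ≤ Y} : ℝ)
        ≤ (1 / 2) * Real.exp (3 * Y)) ∧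
    (Y < Real.log 3 →
      Nat.card {w : List (Fin 2 × ℤ) // IsReducedWord w ∧ w ≠ [] ∧
          ((syllables w).map fun s => Real.log (3 * (syllableDegree s : ℝ))).sum ≤ Y} = 0) := by
  constructor
  · intro hY3
    have hX3 : (3:ℝ) ≤ Real.exp Y := by
      rw [show (3:ℝ) = Real.exp (Real.log 3) from (Real.exp_log (by norm_num)).symm]
      exact Real.exp_le_exp.2 hY3
    have hinj : Function.Injective
        (fun u : {w : List (Fin 2 × ℤ) // IsReducedWord w ∧ w ≠ [] ∧
            ((syllables w).map fun s => Real.log (3 * (syllableDegree s : ℝ))).sum ≤ Y} =>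
          (⟨Stmt18.codeSig u.1, Stmt18.codeSig_mem u.2.1 u.2.2.1 u.2.2.2⟩ :
            {b // b ∈ Stmt18.codeBox (Real.exp Y)})) := by
      intro u v huv
      apply Subtype.ext
      exact Stmt18.codeSig_inj u.2.1 v.2.1 (congrArg Subtype.val huv)
    have h1 := Nat.card_le_card_of_injective _ hinj
    rw [Nat.card_eq_finsetCard] at h1
    have h2 := Stmt18.codeBox_card_le (Real.exp Y) hX3
    have h3 : Real.exp (3*Y) = (Real.exp Y)^3 := by
      rw [show (3:ℝ)*Y = Y + (Y + Y) by ring, Real.exp_add, Real.exp_add]; ring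
    have h4 : (0:ℝ) < (Real.exp Y)^3 := by positivity
    have h5 : (Nat.card {w : List (Fin 2 × ℤ) // IsReducedWord w ∧ w ≠ [] ∧
          ((syllables w).map fun s => Real.log (3 * (syllableDegree s : ℝ))).sum ≤ Y} : ℝ)
        ≤ ((Stmt18.codeBox (Real.exp Y)).card : ℝ) := by exact_mod_cast h1
    rw [h3]
    linarith
  · intro hY3
    have hempty : IsEmpty {w : List (Fin 2 × ℤ) // IsReducedWord w ∧ w ≠ [] ∧
        ((syllables w).map fun s => Real.log (3 * (syllableDegree s : ℝ))).sum ≤ Y} := by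
      refine ⟨fun u => ?_⟩
      obtain ⟨w, hred, hw, hsum⟩ := u
      have hLne := Stmt18.syllables_ne_nil hw
      obtain ⟨s, hs⟩ := List.exists_mem_of_ne_nil _ hLne
      have hdeg : ∀ t ∈ syllables w, (1:ℝ) ≤ (syllableDegree t : ℝ) := by
        intro t ht
        exact_mod_cast Stmt18.one_le_deg (Stmt18.mem_syllables_facts hred ht).1
          (Stmt18.mem_syllables_facts hred ht).2
      have hnn : ∀ x ∈ (syllables w).map fun t => Real.log (3 * (syllableDegree t : ℝ)), 0 ≤ x := by
        intro x hx
        obtain ⟨t, ht, rfl⟩ := List.mem_map.1 hx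
        apply Real.log_nonneg
        have := hdeg t ht
        linarith
      have hterm : Real.log 3 ≤ Real.log (3 * (syllableDegree s : ℝ)) := by
        apply Real.log_le_log (by norm_num)
        have := hdeg s hs
        linarith
      have hle := List.single_le_sum hnn _ (List.mem_map_of_mem hs)
      linarith
    exact Nat.card_of_isEmpty
end
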